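/- Let μ be a finite positive Borel measure on ℝ with μ({t ∈ ℝ : |t| ≥ 1}) = 0, and set q_k := ∫ t^k dμ(t) for k ∈ ℕ. Then the following are equivalent: (a) the Hankel matrix (q_{j+k})_{j,k∈ℕ} defines a bounded operator on ℓ²(ℕ), i.e., there exists C > 0 such that for every finitely supported sequence c : ℕ → ℂ one has ∑_{j∈ℕ} |∑_{k∈ℕ} q_{j+k} c_k|² ≤ C ∑_{k∈ℕ} |c_k|²; (b) there exists C > 0 such that μ({t : |t| > 1 − ε}) ≤ Cε for all ε ∈ (0,1). -/

import Mathlib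

open MeasureTheory Finset



private lemma sq_sum_aux (n : ℕ) :
    ∑ k ∈ Finset.range n, 1 / Real.sqrt (k + 1) ≤ 2 * Real.sqrt n := by
  induction n with
  | zero => simp
  | succ n ih =>
    rw [Finset.sum_range_succ]
    have h1 : (0:ℝ) ≤ n := Nat.cast_nonneg n
    set a := Real.sqrt n with ha
    set b := Real.sqrt ((n:ℝ) + 1) with hb
    have hab : a ≤ b := Real.sqrt_le_sqrt (by linarith)
    have ha0 : 0 ≤ a := Real.sqrt_nonneg _
    have ha2 : a ^ 2 = n := Real.sq_sqrt h1
    have hb2 : b ^ 2 = (n:ℝ) + 1 := Real.sq_sqrt (by linarith)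
    have hbpos : 0 < b := Real.sqrt_pos.2 (by linarith)
    have key : 1 / b ≤ 2 * (b - a) := by
      rw [div_le_iff₀ hbpos]
      nlinarith [sq_nonneg (a - b)]
    have hcast : ((n+1 : ℕ) : ℝ) = (n:ℝ) + 1 := by push_cast; ring
    rw [hcast]
    linarith [ih]

private lemma step_aux (N : ℕ) (hN : 1 ≤ N) :
    1 / (((N:ℝ) + 1) * Real.sqrt ((N:ℝ) + 1)) ≤ 2 / Real.sqrt N - 2 / Real.sqrt ((N:ℝ)+1) := by
  have h1 : (1:ℝ) ≤ N := by exact_mod_cast hN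
  set a := Real.sqrt N with ha
  set b := Real.sqrt ((N:ℝ) + 1) with hb
  have ha2 : a ^ 2 = N := Real.sq_sqrt (by linarith)
  have hb2 : b ^ 2 = (N:ℝ) + 1 := Real.sq_sqrt (by linarith)
  have hapos : 0 < a := Real.sqrt_pos.2 (by linarith)
  have hbpos : 0 < b := Real.sqrt_pos.2 (by linarith)
  have hab : a ≤ b := Real.sqrt_le_sqrt (by linarith)
  rw [← hb2]
  rw [div_sub_div _ _ (ne_of_gt hapos) (ne_of_gt hbpos), div_le_div_iff₀ (by positivity) (by positivity)]
  nlinarith [sq_nonneg (a - b), sq_nonneg (a*b - 1), mul_pos hapos hbpos]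

private lemma tail_sum_aux (m : ℕ) (hm : 1 ≤ m) (N : ℕ) :
    ∑ k ∈ Finset.Ico m N, 1 / (((k:ℝ) + 1) * Real.sqrt ((k:ℝ) + 1)) ≤ 2 / Real.sqrt m := by
  have hmpos : 0 < Real.sqrt m := Real.sqrt_pos.2 (by exact_mod_cast hm)
  have main : ∀ N : ℕ, ∑ k ∈ Finset.Ico m N, 1 / (((k:ℝ) + 1) * Real.sqrt ((k:ℝ) + 1))
      ≤ 2 / Real.sqrt m - 2 / Real.sqrt ((max m N : ℕ) : ℝ) := by
    intro N
    induction N with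
    | zero => simp [Nat.max_zero]
    | succ N ih =>
      rcases Nat.lt_or_ge N m with h | h
      · have he : Finset.Ico m (N+1) = ∅ := Finset.Ico_eq_empty (by omega)
        rcases Nat.lt_or_ge (N+1) m with h2 | h2
        · rw [he, Nat.max_eq_left (by omega)]
          simp
        · have hmN : m = N + 1 := by omega
          rw [he, Nat.max_eq_right (by omega), ← hmN]
          simp
      · have hmax : max m N = N := Nat.max_eq_right h
        have hmax2 : max m (N+1) = N + 1 := Nat.max_eq_right (by omega)
        rw [Finset.sum_Ico_succ_top h, hmax2]
        rw [hmax] at ih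
        have hstep := step_aux N (by omega)
        have hc : ((N+1:ℕ):ℝ) = (N:ℝ) + 1 := by push_cast; ring
        rw [hc]
        linarith
  have := main N
  have h2 : 0 ≤ 2 / Real.sqrt ((max m N : ℕ) : ℝ) := by positivity
  linarith


private lemma rowsum_aux (j : ℕ) (t : Finset ℕ) :
    ∑ k ∈ t, 1 / (((j:ℝ) + (k:ℝ) + 1) * Real.sqrt ((k:ℝ) + 1))
      ≤ 4 / Real.sqrt ((j:ℝ) + 1) := by
  have hsj : 0 < Real.sqrt ((j:ℝ) + 1) := Real.sqrt_pos.2 (by positivity)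
  rw [← Finset.sum_filter_add_sum_filter_not t (· ≤ j)]
  have part1 : ∑ k ∈ t.filter (· ≤ j), 1 / (((j:ℝ) + (k:ℝ) + 1) * Real.sqrt ((k:ℝ) + 1))
      ≤ 2 / Real.sqrt ((j:ℝ) + 1) := by
    calc ∑ k ∈ t.filter (· ≤ j), 1 / (((j:ℝ) + (k:ℝ) + 1) * Real.sqrt ((k:ℝ) + 1))
        ≤ ∑ k ∈ t.filter (· ≤ j), (1/((j:ℝ)+1)) * (1 / Real.sqrt ((k:ℝ) + 1)) := by
          apply Finset.sum_le_sum
          intro k hk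
          rw [one_div_mul_one_div]
          apply one_div_le_one_div_of_le (by positivity)
          have : (0:ℝ) ≤ k := Nat.cast_nonneg k
          nlinarith [Real.sqrt_nonneg ((k:ℝ)+1), Real.sqrt_pos.2 (show (0:ℝ) < (k:ℝ)+1 by positivity)]
      _ ≤ ∑ k ∈ Finset.range (j+1), (1/((j:ℝ)+1)) * (1 / Real.sqrt ((k:ℝ) + 1)) := by
          apply Finset.sum_le_sum_of_subset_of_nonneg
          · intro k hk
            simp only [Finset.mem_filter] at hk
            exact Finset.mem_range.2 (by omega)
          · intro k _ _
            positivity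
      _ = (1/((j:ℝ)+1)) * ∑ k ∈ Finset.range (j+1), 1 / Real.sqrt ((k:ℝ) + 1) := by
          rw [Finset.mul_sum]
      _ ≤ (1/((j:ℝ)+1)) * (2 * Real.sqrt ((j:ℝ)+1)) := by
          apply mul_le_mul_of_nonneg_left _ (by positivity)
          have := sq_sum_aux (j+1)
          have hc : ((j+1:ℕ):ℝ) = (j:ℝ)+1 := by push_cast; ring
          rw [hc] at this
          exact this
      _ = 2 / Real.sqrt ((j:ℝ)+1) := by
          rw [eq_div_iff (ne_of_gt hsj)]
          have : Real.sqrt ((j:ℝ)+1) * Real.sqrt ((j:ℝ)+1) = (j:ℝ)+1 :=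
            Real.mul_self_sqrt (by positivity)
          field_simp
          nlinarith [this]
  have part2 : ∑ k ∈ t.filter (¬ · ≤ j), 1 / (((j:ℝ) + (k:ℝ) + 1) * Real.sqrt ((k:ℝ) + 1))
      ≤ 2 / Real.sqrt ((j:ℝ) + 1) := by
    have hsub : t.filter (¬ · ≤ j) ⊆ Finset.Ico (j+1) (t.sup id + 1) := by
      intro k hk
      simp only [Finset.mem_filter] at hk
      refine Finset.mem_Ico.2 ⟨by omega, ?_⟩
      have := Finset.le_sup (f := id) hk.1
      simp only [id] at this
      omega
    calc ∑ k ∈ t.filter (¬ · ≤ j), 1 / (((j:ℝ) + (k:ℝ) + 1) * Real.sqrt ((k:ℝ) + 1))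
        ≤ ∑ k ∈ t.filter (¬ · ≤ j), 1 / (((k:ℝ) + 1) * Real.sqrt ((k:ℝ) + 1)) := by
          apply Finset.sum_le_sum
          intro k hk
          apply one_div_le_one_div_of_le (by positivity)
          have : (0:ℝ) ≤ j := Nat.cast_nonneg j
          nlinarith [Real.sqrt_pos.2 (show (0:ℝ) < (k:ℝ)+1 by positivity)]
      _ ≤ ∑ k ∈ Finset.Ico (j+1) (t.sup id + 1), 1 / (((k:ℝ) + 1) * Real.sqrt ((k:ℝ) + 1)) := by
          apply Finset.sum_le_sum_of_subset_of_nonneg hsub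
          intro k _ _
          positivity
      _ ≤ 2 / Real.sqrt ((j+1:ℕ):ℝ) := tail_sum_aux (j+1) (by omega) _
      _ = 2 / Real.sqrt ((j:ℝ)+1) := by norm_num
  have h4 : (2:ℝ)/Real.sqrt ((j:ℝ)+1) + 2/Real.sqrt ((j:ℝ)+1) = 4 / Real.sqrt ((j:ℝ)+1) := by ring
  linarith

private lemma schur_aux (s t : Finset ℕ) (b : ℕ → ℝ) (hb : ∀ k, 0 ≤ b k) :
    ∑ j ∈ s, (∑ k ∈ t, b k / ((j:ℝ) + (k:ℝ) + 1)) ^ 2 ≤ 16 * ∑ k ∈ t, b k ^ 2 := by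
  set h : ℕ → ℝ := fun k => Real.sqrt ((k:ℝ) + 1) with hh
  have hpos : ∀ k, 0 < h k := fun k => Real.sqrt_pos.2 (by positivity)
  have key : ∀ j ∈ s, (∑ k ∈ t, b k / ((j:ℝ) + (k:ℝ) + 1)) ^ 2
      ≤ (4 / h j) * ∑ k ∈ t, (h k * b k ^ 2) / ((j:ℝ) + (k:ℝ) + 1) := by
    intro j _
    have hd : ∀ k : ℕ, (0:ℝ) < (j:ℝ) + (k:ℝ) + 1 := fun k => by positivity
    have cs := Finset.sum_mul_sq_le_sq_mul_sq t
      (fun k => Real.sqrt (1 / (((j:ℝ) + (k:ℝ) + 1) * h k)))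
      (fun k => Real.sqrt (h k / ((j:ℝ) + (k:ℝ) + 1)) * b k)
    have e1 : ∀ k : ℕ, Real.sqrt (1 / (((j:ℝ) + (k:ℝ) + 1) * h k)) *
        (Real.sqrt (h k / ((j:ℝ) + (k:ℝ) + 1)) * b k) = b k / ((j:ℝ) + (k:ℝ) + 1) := by
      intro k
      rw [← mul_assoc, ← Real.sqrt_mul (by positivity)]
      have : 1 / (((j:ℝ) + (k:ℝ) + 1) * h k) * (h k / ((j:ℝ) + (k:ℝ) + 1))
          = (1/((j:ℝ) + (k:ℝ) + 1)) ^ 2 := by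
        field_simp
        ring_nf
        exact mul_inv_cancel₀ (hpos k).ne'
      rw [this, Real.sqrt_sq (by positivity)]
      field_simp
    have e2 : ∀ k : ℕ, (Real.sqrt (1 / (((j:ℝ) + (k:ℝ) + 1) * h k))) ^ 2
        = 1 / (((j:ℝ) + (k:ℝ) + 1) * h k) := fun k => Real.sq_sqrt (by positivity)
    have e3 : ∀ k : ℕ, (Real.sqrt (h k / ((j:ℝ) + (k:ℝ) + 1)) * b k) ^ 2
        = (h k * b k ^ 2) / ((j:ℝ) + (k:ℝ) + 1) := by
      intro k
      rw [mul_pow, Real.sq_sqrt (by positivity)]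
      ring
    rw [Finset.sum_congr rfl (fun k _ => e1 k)] at cs
    rw [Finset.sum_congr rfl (fun k _ => e2 k)] at cs
    rw [Finset.sum_congr rfl (fun k _ => e3 k)] at cs
    refine le_trans cs ?_
    apply mul_le_mul_of_nonneg_right (rowsum_aux j t)
    apply Finset.sum_nonneg
    intro k _
    have := hpos k
    positivity
  calc ∑ j ∈ s, (∑ k ∈ t, b k / ((j:ℝ) + (k:ℝ) + 1)) ^ 2
      ≤ ∑ j ∈ s, (4 / h j) * ∑ k ∈ t, (h k * b k ^ 2) / ((j:ℝ) + (k:ℝ) + 1) :=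
        Finset.sum_le_sum key
    _ = ∑ k ∈ t, (4 * (h k * b k ^ 2)) * ∑ j ∈ s, 1 / (((k:ℝ) + (j:ℝ) + 1) * h j) := by
        simp_rw [Finset.mul_sum]
        rw [Finset.sum_comm]
        apply Finset.sum_congr rfl
        intro k _
        apply Finset.sum_congr rfl
        intro j _
        have h1 := (hpos j).ne'
        have h2 : ((j:ℝ) + (k:ℝ) + 1) ≠ 0 := by positivity
        have h3 : ((k:ℝ) + (j:ℝ) + 1) = ((j:ℝ) + (k:ℝ) + 1) := by ring
        rw [h3, div_mul_div_comm, mul_one_div, mul_comm (h j)]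
    _ ≤ ∑ k ∈ t, (4 * (h k * b k ^ 2)) * (4 / h k) := by
        apply Finset.sum_le_sum
        intro k _
        apply mul_le_mul_of_nonneg_left (rowsum_aux k s)
        have := hpos k
        have := hb k
        positivity
    _ = 16 * ∑ k ∈ t, b k ^ 2 := by
        rw [Finset.mul_sum]
        apply Finset.sum_congr rfl
        intro k _
        have h1 := (hpos k).ne'
        field_simp
        ring
  done


private lemma ae_lt_one (μ : Measure ℝ) (hμ : μ {t : ℝ | 1 ≤ |t|} = 0) :
    ∀ᵐ t ∂μ, |t| < 1 := by
  rw [ae_iff]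
  convert hμ using 2
  ext t
  simp [not_lt]

private lemma integrable_abs_pow (μ : Measure ℝ) [IsFiniteMeasure μ]
    (hμ : μ {t : ℝ | 1 ≤ |t|} = 0) (n : ℕ) :
    Integrable (fun t : ℝ => |t| ^ n) μ := by
  refine Integrable.mono' (integrable_const 1) ?_ ?_
  · exact ((measurable_abs.pow_const n)).aestronglyMeasurable
  · filter_upwards [ae_lt_one μ hμ] with t ht
    rw [Real.norm_eq_abs, abs_of_nonneg (by positivity)]
    exact pow_le_one₀ (abs_nonneg t) ht.le

private lemma moment_bound (μ : Measure ℝ) [IsFiniteMeasure μ]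
    (hμ : μ {t : ℝ | 1 ≤ |t|} = 0) (C : ℝ) (hC : 0 < C)
    (hb : ∀ ε ∈ Set.Ioo (0 : ℝ) 1, μ {t : ℝ | 1 - ε < |t|} ≤ ENNReal.ofReal (C * ε))
    (n : ℕ) (hn : 1 ≤ n) :
    (∫ t, |t| ^ n ∂μ) ≤ C / (n + 1) := by
  have hn0 : ((n:ℝ)) ≠ 0 := by positivity
  have hnn : (0:ℝ) < ((n:ℝ))⁻¹ := by positivity
  have hint := integrable_abs_pow μ hμ n
  have hnonneg : 0 ≤ᵐ[μ] fun t : ℝ => |t| ^ n :=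
    Filter.Eventually.of_forall (fun t => by positivity)
  have key : ENNReal.ofReal (∫ t, |t| ^ n ∂μ) ≤ ENNReal.ofReal (C / (n + 1)) := by
    rw [ofReal_integral_eq_lintegral_ofReal hint hnonneg]
    rw [MeasureTheory.lintegral_eq_lintegral_meas_lt μ hnonneg
      ((measurable_abs.pow_const n)).aemeasurable]
    have step1 : ∫⁻ s in Set.Ioi (0:ℝ), μ {t : ℝ | s < |t| ^ n}
        ≤ ∫⁻ s in Set.Ioi (0:ℝ), ENNReal.ofReal (C * (1 - s ^ ((n:ℝ))⁻¹)) := by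
      apply setLIntegral_mono
      · apply Measurable.ennreal_ofReal
        fun_prop
      · intro s hs
        have hs0 : (0:ℝ) < s := hs
        rcases le_or_gt 1 s with h1 | h1
        · have : {t : ℝ | s < |t| ^ n} ⊆ {t : ℝ | 1 ≤ |t|} := by
            intro t ht
            simp only [Set.mem_setOf_eq] at ht ⊢
            by_contra hc
            push_neg at hc
            have : |t| ^ n ≤ 1 := pow_le_one₀ (abs_nonneg t) hc.le
            linarith
          calc μ {t : ℝ | s < |t| ^ n} ≤ μ {t : ℝ | 1 ≤ |t|} := measure_mono this
            _ = 0 := hμ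
            _ ≤ _ := zero_le
        · set u := s ^ ((n:ℝ))⁻¹ with hu
          have hu0 : 0 < u := Real.rpow_pos_of_pos hs0 _
          have hu1 : u < 1 := Real.rpow_lt_one hs0.le h1 hnn
          have hun : u ^ n = s := by
            rw [hu, ← Real.rpow_natCast (s ^ ((n:ℝ))⁻¹) n, ← Real.rpow_mul hs0.le,
              inv_mul_cancel₀ hn0, Real.rpow_one]
          have hsub : {t : ℝ | s < |t| ^ n} ⊆ {t : ℝ | 1 - (1 - u) < |t|} := by
            intro t ht
            simp only [Set.mem_setOf_eq] at ht ⊢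
            rw [sub_sub_cancel]
            by_contra hc
            push_neg at hc
            have : |t| ^ n ≤ u ^ n := pow_le_pow_left₀ (abs_nonneg t) hc n
            rw [hun] at this
            linarith
          have hε : (1 - u) ∈ Set.Ioo (0:ℝ) 1 := ⟨by linarith, by linarith⟩
          calc μ {t : ℝ | s < |t| ^ n} ≤ μ {t : ℝ | 1 - (1 - u) < |t|} := measure_mono hsub
            _ ≤ ENNReal.ofReal (C * (1 - u)) := hb _ hε
    refine le_trans step1 ?_
    have hsplit : Set.Ioi (0:ℝ) = Set.Ioc (0:ℝ) 1 ∪ Set.Ioi 1 :=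
      (Set.Ioc_union_Ioi_eq_Ioi (by norm_num)).symm
    rw [hsplit, lintegral_union measurableSet_Ioi (Set.Ioc_disjoint_Ioi le_rfl)]
    have hzero : ∫⁻ s in Set.Ioi (1:ℝ), ENNReal.ofReal (C * (1 - s ^ ((n:ℝ))⁻¹)) = 0 := by
      rw [setLIntegral_congr_fun measurableSet_Ioi
        (fun s hs => ?_), lintegral_zero]
      have hs1 : (1:ℝ) < s := hs
      have : (1:ℝ) ≤ s ^ ((n:ℝ))⁻¹ := Real.one_le_rpow hs1.le hnn.le
      have : C * (1 - s ^ ((n:ℝ))⁻¹) ≤ 0 := by nlinarith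
      exact ENNReal.ofReal_eq_zero.2 this
    rw [hzero, add_zero]
    have hintOn : IntegrableOn (fun s : ℝ => C * (1 - s ^ ((n:ℝ))⁻¹)) (Set.Ioc 0 1) := by
      apply Integrable.const_mul
      apply Integrable.sub (show Integrable (fun _ : ℝ => (1:ℝ)) (volume.restrict (Set.Ioc (0:ℝ) 1)) from integrableOn_const measure_Ioc_lt_top.ne)
      have := intervalIntegral.intervalIntegrable_rpow' (a := 0) (b := 1)
        (r := ((n:ℝ))⁻¹) (by linarith)
      rwa [intervalIntegrable_iff_integrableOn_Ioc_of_le (by norm_num)] at this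
    rw [← ofReal_integral_eq_lintegral_ofReal hintOn]
    · apply ENNReal.ofReal_le_ofReal
      have hcomp : ∫ s in Set.Ioc (0:ℝ) 1, C * (1 - s ^ ((n:ℝ))⁻¹) = C / (n + 1) := by
        rw [← intervalIntegral.integral_of_le (by norm_num : (0:ℝ) ≤ 1)]
        rw [intervalIntegral.integral_const_mul]
        have hii : IntervalIntegrable (fun s : ℝ => s ^ ((n:ℝ))⁻¹) volume 0 1 :=
          intervalIntegral.intervalIntegrable_rpow' (by linarith)
        have h1 : ∫ s in (0:ℝ)..1, (1 - s ^ ((n:ℝ))⁻¹)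
            = 1 - 1 / (((n:ℝ))⁻¹ + 1) := by
          rw [intervalIntegral.integral_sub intervalIntegrable_const hii]
          rw [integral_rpow (Or.inl (by linarith))]
          rw [Real.one_rpow, Real.zero_rpow (by positivity)]
          simp
        rw [h1]
        have hne : ((n:ℝ))⁻¹ + 1 ≠ 0 := by positivity
        have hne2 : (n:ℝ) + 1 ≠ 0 := by positivity
        field_simp
        ring
      rw [hcomp]
    · apply (ae_restrict_iff' measurableSet_Ioc).2
      apply Filter.Eventually.of_forall
      intro s hs
      have h2 : s ^ ((n:ℝ))⁻¹ ≤ 1 := Real.rpow_le_one hs.1.le hs.2 hnn.le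
      simp only [Pi.zero_apply]
      nlinarith
  have hp : 0 ≤ ∫ t, |t| ^ n ∂μ := integral_nonneg (fun t => by positivity)
  exact (ENNReal.ofReal_le_ofReal_iff (by positivity)).1 key


private lemma integrable_pow_mu (μ : Measure ℝ) [IsFiniteMeasure μ]
    (hμ : μ {t : ℝ | 1 ≤ |t|} = 0) (n : ℕ) :
    Integrable (fun t : ℝ => t ^ n) μ := by
  refine Integrable.mono' (integrable_const 1) ?_ ?_
  · exact (measurable_id.pow_const n).aestronglyMeasurable
  · filter_upwards [ae_lt_one μ hμ] with t ht
    rw [Real.norm_eq_abs, abs_pow]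
    exact pow_le_one₀ (abs_nonneg t) ht.le

private lemma geom_sum_nonneg' (x : ℝ) (hx : |x| < 1) (n : ℕ) :
    0 ≤ ∑ k ∈ Finset.range n, x ^ k := by
  have hx1 : x < 1 := lt_of_le_of_lt (le_abs_self x) hx
  rw [geom_sum_eq (by intro h; rw [h] at hx; norm_num at hx)]
  rw [show x ^ n - 1 = -(1 - x^n) by ring, show x - 1 = -(1-x) by ring, neg_div_neg_eq]
  apply div_nonneg _ (by linarith)
  have : x ^ n ≤ 1 := by
    calc x ^ n ≤ |x ^ n| := le_abs_self _
      _ = |x| ^ n := abs_pow x n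
      _ ≤ 1 := pow_le_one₀ (abs_nonneg x) hx.le
  linarith

set_option maxHeartbeats 2000000 in
private lemma side_bound (μ : Measure ℝ) [IsFiniteMeasure μ]
    (hμ : μ {t : ℝ | 1 ≤ |t|} = 0)
    (q : ℕ → ℝ) (hq : ∀ k : ℕ, q k = ∫ t, t ^ k ∂μ)
    (Cop : ℝ) (hCop : 0 < Cop)
    (ha : ∀ c : ℕ →₀ ℂ, ∀ F : Finset ℕ,
        ∑ j ∈ F, ‖∑ k ∈ c.support, (q (j + k) : ℂ) * c k‖ ^ 2 ≤
          Cop * ∑ k ∈ c.support, ‖c k‖ ^ 2)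
    (ε : ℝ) (hε0 : 0 < ε) (hε8 : ε < 1/8) (s : ℝ) (hs : s = 1 ∨ s = -1) :
    (μ {t : ℝ | 1 - ε < s * t ∧ s * t < 1}).toReal ≤ 28 * Real.sqrt Cop * ε := by
  have hs1 : |s| = 1 := by rcases hs with h | h <;> rw [h] <;> norm_num
  set n := Nat.ceil (1/(4*ε)) with hn
  have hn1 : 1/(4*ε) ≤ (n:ℝ) := Nat.le_ceil _
  have hn2 : (n:ℝ) < 1/(4*ε) + 1 := Nat.ceil_lt_add_one (by positivity)
  have h8 : (1:ℝ) ≤ 1/(8*ε) := by rw [le_div_iff₀ (by positivity)]; linarith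
  have hnU : (n:ℝ) ≤ 3/(8*ε) := by
    have : 1/(4*ε) + 1/(8*ε) = 3/(8*ε) := by field_simp; ring
    linarith
  have hn2R : (2:ℝ) < (n:ℝ) := by
    have : (2:ℝ) < 1/(4*ε) := by rw [lt_div_iff₀ (by positivity)]; linarith
    linarith
  have hn3 : 3 ≤ n := by
    have : (2:ℕ) < n := by exact_mod_cast hn2R
    omega
  have hnpos : (0:ℝ) < n := by linarith
  have hnε : (n:ℝ) * ε ≤ 3/8 := by
    have h := mul_le_mul_of_nonneg_right hnU hε0.le
    have h2 : 3/(8*ε) * ε = 3/8 := by field_simp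
    linarith
  -- the test sequence
  set c : ℕ →₀ ℂ := Finsupp.onFinset (Finset.range n)
    (fun k => if k < n then ((s ^ k : ℝ) : ℂ) else 0)
    (fun k h => Finset.mem_range.2 (by by_contra hc; simp [hc] at h)) with hc
  have hcsup : c.support ⊆ Finset.range n := Finsupp.support_onFinset_subset
  have hcval : ∀ k, k < n → c k = ((s ^ k : ℝ) : ℂ) := by
    intro k hk
    simp [hc, Finsupp.onFinset_apply, hk]
  set E : Set ℝ := {t : ℝ | 1 - ε < s * t ∧ s * t < 1} with hE
  have hEmeas : MeasurableSet E := by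
    have : E = (fun t : ℝ => s * t) ⁻¹' (Set.Ioo (1-ε) 1) := rfl
    rw [this]
    exact measurableSet_Ioo.preimage (measurable_id.const_mul s)
  set M : ℝ := (μ E).toReal with hM
  have hM0 : 0 ≤ M := ENNReal.toReal_nonneg
  -- for each even j ≤ n, the key lower bound
  have key : ∀ j : ℕ, Even j → j ≤ n →
      (n:ℝ)/4 * M ≤ ∑ k ∈ Finset.range n, q (j + k) * s ^ k := by
    intro j hjeven hjn
    set Fj : ℝ → ℝ := fun t => ∑ k ∈ Finset.range n, t ^ (j + k) * s ^ k with hFj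
    have hintj : Integrable Fj μ :=
      integrable_finset_sum _ (fun k _ => (integrable_pow_mu μ hμ (j+k)).mul_const _)
    have hRj : ∑ k ∈ Finset.range n, q (j + k) * s ^ k = ∫ t, Fj t ∂μ := by
      rw [hFj, integral_finset_sum _ (fun k _ => (integrable_pow_mu μ hμ (j+k)).mul_const _)]
      refine Finset.sum_congr rfl (fun k _ => ?_)
      rw [hq (j+k), ← integral_mul_const]
    have hFform : ∀ t : ℝ, Fj t = t ^ j * ∑ k ∈ Finset.range n, (s*t) ^ k := by
      intro t
      rw [Finset.mul_sum]
      refine Finset.sum_congr rfl (fun k _ => ?_)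
      rw [mul_pow, pow_add]
      ring
    have hFnonneg : 0 ≤ᵐ[μ] Fj := by
      filter_upwards [ae_lt_one μ hμ] with t ht
      rw [Pi.zero_apply, hFform]
      apply mul_nonneg (hjeven.pow_nonneg t)
      apply geom_sum_nonneg'
      rw [abs_mul, hs1, one_mul]
      exact ht
    have hFlow : ∀ t ∈ E, (n:ℝ)/4 ≤ Fj t := by
      intro t ht
      obtain ⟨ht1, ht2⟩ := ht
      set x := s * t with hx
      have hx0 : 0 < x := by linarith
      have hx1 : x < 1 := ht2
      have hxε : 1 - ε ≤ x := ht1.le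
      have hε1 : (0:ℝ) ≤ 1 - ε := by linarith
      have htj : t ^ j = x ^ j := by
        rw [hx, mul_pow]
        have : s ^ j = 1 := by
          rcases hs with h | h
          · rw [h, one_pow]
          · rw [h, hjeven.neg_one_pow]
        rw [this, one_mul]
      have hG : (n:ℝ) * (1-ε) ^ (n-1) ≤ ∑ k ∈ Finset.range n, x ^ k := by
        calc (n:ℝ) * (1-ε) ^ (n-1) = ∑ _k ∈ Finset.range n, (1-ε) ^ (n-1) := by
              rw [Finset.sum_const, Finset.card_range, nsmul_eq_mul]
          _ ≤ ∑ k ∈ Finset.range n, x ^ k := by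
              apply Finset.sum_le_sum
              intro k hk
              calc (1-ε) ^ (n-1) ≤ x ^ (n-1) := pow_le_pow_left₀ hε1 hxε _
                _ ≤ x ^ k := pow_le_pow_of_le_one hx0.le hx1.le
                    (by have := Finset.mem_range.1 hk; omega)
      have hxj : (1-ε) ^ j ≤ x ^ j := pow_le_pow_left₀ hε1 hxε _
      have hlow2 : (n:ℝ) * (1-ε) ^ (j + (n-1)) ≤ Fj t := by
        rw [hFform, htj, pow_add]
        calc (n:ℝ) * ((1-ε)^j * (1-ε)^(n-1)) = (1-ε)^j * ((n:ℝ) * (1-ε)^(n-1)) := by ring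
          _ ≤ x ^ j * ∑ k ∈ Finset.range n, x ^ k := by
              apply mul_le_mul hxj hG (by positivity) (by positivity)
      have hpow : (1-ε) ^ (2*n) ≤ (1-ε) ^ (j + (n-1)) :=
        pow_le_pow_of_le_one hε1 (by linarith) (by omega)
      have hbern : 1 - 2*(n:ℝ)*ε ≤ (1-ε) ^ (2*n) := by
        have := one_add_mul_le_pow (show (-2:ℝ) ≤ -ε by linarith) (2*n)
        calc 1 - 2*(n:ℝ)*ε = 1 + (((2*n:ℕ)):ℝ) * (-ε) := by push_cast; ring
          _ ≤ (1 + -ε) ^ (2*n) := this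
          _ = (1-ε) ^ (2*n) := by ring_nf
      have hquarter : (1:ℝ)/4 ≤ (1-ε) ^ (j + (n-1)) := by
        have : (1:ℝ)/4 ≤ 1 - 2*(n:ℝ)*ε := by nlinarith
        linarith
      calc (n:ℝ)/4 = (n:ℝ) * (1/4) := by ring
        _ ≤ (n:ℝ) * (1-ε) ^ (j + (n-1)) := by
            apply mul_le_mul_of_nonneg_left hquarter (by positivity)
        _ ≤ Fj t := hlow2
    have hconst : (n:ℝ)/4 * M ≤ ∫ t in E, Fj t ∂μ :=
      setIntegral_ge_of_const_le_real hEmeas (measure_ne_top μ E) hFlow hintj.integrableOn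
    rw [hRj]
    exact le_trans hconst (setIntegral_le_integral hintj hFnonneg)
  -- assemble with the operator bound
  set m : ℕ := n / 2 with hm
  set F : Finset ℕ := (Finset.range m).image (fun i => 2*i) with hF
  have hcard : F.card = m := by
    rw [hF, Finset.card_image_of_injective _ (fun a b h => by omega), Finset.card_range]
  have hinner : ∀ j : ℕ, ∑ k ∈ c.support, (q (j + k) : ℂ) * c k
      = ((∑ k ∈ Finset.range n, q (j + k) * s ^ k : ℝ) : ℂ) := by
    intro j
    rw [Finset.sum_subset hcsup (fun k _ hk => by
      rw [Finsupp.notMem_support_iff.1 hk, mul_zero])]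
    push_cast
    refine Finset.sum_congr rfl (fun k hk => ?_)
    rw [hcval k (Finset.mem_range.1 hk)]
    push_cast
    ring
  have hterm : ∀ j ∈ F, ((n:ℝ)/4 * M)^2 ≤ ‖∑ k ∈ c.support, (q (j + k) : ℂ) * c k‖ ^ 2 := by
    intro j hj
    obtain ⟨i, hi, rfl⟩ := Finset.mem_image.1 hj
    have hi' := Finset.mem_range.1 hi
    have hjev : Even (2*i) := even_two_mul i
    have hjn : 2*i ≤ n := by omega
    rw [hinner, Complex.norm_real, Real.norm_eq_abs]
    apply pow_le_pow_left₀ (mul_nonneg (by positivity) hM0)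
    exact le_trans (key _ hjev hjn) (le_abs_self _)
  have hsupnorm : ∑ k ∈ c.support, ‖c k‖ ^ 2 ≤ (n:ℝ) := by
    calc ∑ k ∈ c.support, ‖c k‖ ^ 2 ≤ ∑ k ∈ Finset.range n, ‖c k‖ ^ 2 :=
          Finset.sum_le_sum_of_subset_of_nonneg hcsup (fun k _ _ => by positivity)
      _ ≤ ∑ _k ∈ Finset.range n, 1 := by
          apply Finset.sum_le_sum
          intro k hk
          rw [hcval k (Finset.mem_range.1 hk), Complex.norm_real, Real.norm_eq_abs,
            abs_pow, hs1, one_pow]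
          norm_num
      _ = (n:ℝ) := by simp
  have hmain : (m:ℝ) * ((n:ℝ)/4 * M)^2 ≤ Cop * n := by
    calc (m:ℝ) * ((n:ℝ)/4 * M)^2 = ∑ _j ∈ F, ((n:ℝ)/4 * M)^2 := by
          rw [Finset.sum_const, hcard, nsmul_eq_mul]
      _ ≤ ∑ j ∈ F, ‖∑ k ∈ c.support, (q (j + k) : ℂ) * c k‖ ^ 2 := Finset.sum_le_sum hterm
      _ ≤ Cop * ∑ k ∈ c.support, ‖c k‖ ^ 2 := ha c F
      _ ≤ Cop * n := mul_le_mul_of_nonneg_left hsupnorm hCop.le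
  have hm3 : (n:ℝ)/3 ≤ (m:ℝ) := by
    have : n ≤ 3 * m := by omega
    have := (Nat.cast_le (α := ℝ)).2 this
    push_cast at this
    linarith
  have hnM : ((n:ℝ) * M)^2 ≤ 48 * Cop := by
    have h1 : (n:ℝ)/3 * ((n:ℝ)/4 * M)^2 ≤ Cop * n :=
      le_trans (mul_le_mul_of_nonneg_right hm3 (sq_nonneg _)) hmain
    have h2 : (n:ℝ) * (((n:ℝ) * M)^2) ≤ (n:ℝ) * (48 * Cop) := by nlinarith [h1]
    exact le_of_mul_le_mul_left h2 hnpos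
  set a : ℝ := Real.sqrt Cop with haa
  have ha2 : a ^ 2 = Cop := Real.sq_sqrt hCop.le
  have ha0 : 0 ≤ a := Real.sqrt_nonneg _
  have h7 : (n:ℝ) * M ≤ 7 * a := by
    have h49 : ((n:ℝ)*M)^2 ≤ (7*a)^2 := by nlinarith [ha2, sq_nonneg a]
    have := Real.sqrt_le_sqrt h49
    rwa [Real.sqrt_sq (mul_nonneg hnpos.le hM0),
      Real.sqrt_sq (by linarith : (0:ℝ) ≤ 7*a)] at this
  have h4 : 1 ≤ 4 * (n:ℝ) * ε := by
    rw [div_le_iff₀ (by positivity)] at hn1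
    linarith
  nlinarith [mul_nonneg (sub_nonneg.2 h4) hM0, mul_le_mul_of_nonneg_left h7 (by linarith : (0:ℝ) ≤ 4*ε)]


theorem stmt_6 (μ : Measure ℝ) [IsFiniteMeasure μ]
    (hμ : μ {t : ℝ | 1 ≤ |t|} = 0)
    (q : ℕ → ℝ) (hq : ∀ k : ℕ, q k = ∫ t, t ^ k ∂μ) :
    (∃ C > 0, ∀ c : ℕ →₀ ℂ, ∀ F : Finset ℕ,
        ∑ j ∈ F, ‖∑ k ∈ c.support, (q (j + k) : ℂ) * c k‖ ^ 2 ≤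
          C * ∑ k ∈ c.support, ‖c k‖ ^ 2) ↔
      (∃ C > 0, ∀ ε ∈ Set.Ioo (0 : ℝ) 1, μ {t : ℝ | 1 - ε < |t|} ≤ ENNReal.ofReal (C * ε)) := by
  constructor
  · rintro ⟨Cop, hCop, ha⟩
    set a : ℝ := Real.sqrt Cop with haa
    have ha0 : 0 ≤ a := Real.sqrt_nonneg _
    set T : ℝ := (μ Set.univ).toReal with hT
    have hT0 : 0 ≤ T := ENNReal.toReal_nonneg
    refine ⟨56 * a + 8 * T + 1, by positivity, ?_⟩
    rintro ε ⟨hε0, hε1⟩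
    rcases lt_or_ge ε (1/8) with h8 | h8
    · have h1 := side_bound μ hμ q hq Cop hCop ha ε hε0 h8 1 (Or.inl rfl)
      have h2 := side_bound μ hμ q hq Cop hCop ha ε hε0 h8 (-1) (Or.inr rfl)
      have hb1 : μ {t : ℝ | 1 - ε < 1 * t ∧ 1 * t < 1} ≤ ENNReal.ofReal (28 * a * ε) :=
        (ENNReal.le_ofReal_iff_toReal_le (measure_ne_top μ _) (by positivity)).2 h1
      have hb2 : μ {t : ℝ | 1 - ε < (-1) * t ∧ (-1) * t < 1} ≤ ENNReal.ofReal (28 * a * ε) :=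
        (ENNReal.le_ofReal_iff_toReal_le (measure_ne_top μ _) (by positivity)).2 h2
      have hsub : {t : ℝ | 1 - ε < |t|} ⊆
          ({t : ℝ | 1 - ε < 1 * t ∧ 1 * t < 1} ∪ {t : ℝ | 1 - ε < (-1) * t ∧ (-1) * t < 1})
            ∪ {t : ℝ | 1 ≤ |t|} := by
        intro t ht
        simp only [Set.mem_setOf_eq, Set.mem_union, one_mul, neg_mul, neg_one_mul] at *
        rcases le_or_gt 1 |t| with h | h
        · exact Or.inr h
        · left
          rcases le_or_gt 0 t with h0 | h0
          · left
            rw [abs_of_nonneg h0] at ht h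
            exact ⟨ht, h⟩
          · right
            rw [abs_of_neg h0] at ht h
            exact ⟨ht, h⟩
      calc μ {t : ℝ | 1 - ε < |t|}
          ≤ μ (({t : ℝ | 1 - ε < 1 * t ∧ 1 * t < 1} ∪ {t : ℝ | 1 - ε < (-1) * t ∧ (-1) * t < 1})
            ∪ {t : ℝ | 1 ≤ |t|}) := measure_mono hsub
        _ ≤ (μ {t : ℝ | 1 - ε < 1 * t ∧ 1 * t < 1} + μ {t : ℝ | 1 - ε < (-1) * t ∧ (-1) * t < 1})
            + μ {t : ℝ | 1 ≤ |t|} :=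
            le_trans (measure_union_le _ _) (by gcongr; exact measure_union_le _ _)
        _ ≤ (ENNReal.ofReal (28 * a * ε) + ENNReal.ofReal (28 * a * ε)) + 0 := by
            gcongr
            exact le_of_eq hμ
        _ = ENNReal.ofReal (28 * a * ε) + ENNReal.ofReal (28 * a * ε) := by rw [add_zero]
        _ = ENNReal.ofReal (28 * a * ε + 28 * a * ε) := (ENNReal.ofReal_add (by positivity) (by positivity)).symm
        _ ≤ ENNReal.ofReal ((56 * a + 8 * T + 1) * ε) := by
            apply ENNReal.ofReal_le_ofReal
            nlinarith
    · calc μ {t : ℝ | 1 - ε < |t|} ≤ μ Set.univ := measure_mono (Set.subset_univ _)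
        _ = ENNReal.ofReal T := (ENNReal.ofReal_toReal (measure_ne_top μ _)).symm
        _ ≤ ENNReal.ofReal ((56 * a + 8 * T + 1) * ε) := by
            apply ENNReal.ofReal_le_ofReal
            nlinarith
  · rintro ⟨C, hC, hb⟩
    set T : ℝ := (μ Set.univ).toReal with hT
    have hT0 : 0 ≤ T := ENNReal.toReal_nonneg
    set c0 : ℝ := C + T with hc0
    have hc0pos : 0 < c0 := by positivity
    have hqb : ∀ m : ℕ, |q m| ≤ c0 / ((m:ℝ) + 1) := by
      intro m
      have habs : |q m| ≤ ∫ t, |t| ^ m ∂μ := by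
        rw [hq m]
        calc |∫ t, t ^ m ∂μ| = ‖∫ t, t ^ m ∂μ‖ := (Real.norm_eq_abs _).symm
          _ ≤ ∫ t, ‖t ^ m‖ ∂μ := norm_integral_le_integral_norm _
          _ = ∫ t, |t| ^ m ∂μ := by simp_rw [Real.norm_eq_abs, abs_pow]
      rcases Nat.eq_zero_or_pos m with hm | hm
      · subst hm
        have : ∫ t, |t| ^ 0 ∂μ = T := by simp [hT, Measure.real]
        rw [this] at habs
        simpa using le_trans habs (by linarith : T ≤ c0 / ((0:ℝ)+1) * 1)
      · have := moment_bound μ hμ C hC hb m hm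
        refine le_trans habs (le_trans this ?_)
        gcongr
        linarith
    refine ⟨16 * c0 ^ 2, by positivity, ?_⟩
    intro c F
    calc ∑ j ∈ F, ‖∑ k ∈ c.support, (q (j + k) : ℂ) * c k‖ ^ 2
        ≤ ∑ j ∈ F, (c0 * ∑ k ∈ c.support, ‖c k‖ / ((j:ℝ) + (k:ℝ) + 1)) ^ 2 := by
          apply Finset.sum_le_sum
          intro j _
          apply pow_le_pow_left₀ (norm_nonneg _)
          calc ‖∑ k ∈ c.support, (q (j + k) : ℂ) * c k‖
              ≤ ∑ k ∈ c.support, ‖(q (j + k) : ℂ) * c k‖ := norm_sum_le _ _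
            _ ≤ ∑ k ∈ c.support, c0 * (‖c k‖ / ((j:ℝ) + (k:ℝ) + 1)) := by
                apply Finset.sum_le_sum
                intro k _
                rw [norm_mul, Complex.norm_real, Real.norm_eq_abs]
                have hd : ((j:ℝ) + (k:ℝ) + 1) = ((j+k:ℕ):ℝ) + 1 := by push_cast; ring
                have := hqb (j + k)
                calc |q (j + k)| * ‖c k‖ ≤ (c0 / (((j+k:ℕ):ℝ) + 1)) * ‖c k‖ :=
                      mul_le_mul_of_nonneg_right this (norm_nonneg _)
                  _ = c0 * (‖c k‖ / ((j:ℝ) + (k:ℝ) + 1)) := by rw [hd]; ring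
            _ = c0 * ∑ k ∈ c.support, ‖c k‖ / ((j:ℝ) + (k:ℝ) + 1) := by rw [Finset.mul_sum]
      _ = c0 ^ 2 * ∑ j ∈ F, (∑ k ∈ c.support, ‖c k‖ / ((j:ℝ) + (k:ℝ) + 1)) ^ 2 := by
          rw [Finset.mul_sum]
          exact Finset.sum_congr rfl (fun j _ => by rw [mul_pow])
      _ ≤ c0 ^ 2 * (16 * ∑ k ∈ c.support, ‖c k‖ ^ 2) := by
          apply mul_le_mul_of_nonneg_left
            (schur_aux F c.support _ (fun k => norm_nonneg _)) (by positivity)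
      _ = 16 * c0 ^ 2 * ∑ k ∈ c.support, ‖c k‖ ^ 2 := by ring
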